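/- For any density matrices ρ and σ on ℂ^n with ρ ≠ σ and any α > 1, ‖sup_α(ρ/σ)·σ − ρ‖₁ / (sup_α(ρ/σ) − 1) = (α+1)/(α−1). -/

import Mathlib

open scoped ComplexOrder

/-- The trace norm of a matrix, `‖A‖₁ = Tr[√(AᴴA)]`. -/
noncomputable def traceNorm {n : ℕ} (A : Matrix (Fin n) (Fin n) ℂ) : ℝ :=
  (((Matrix.posSemidef_conjTranspose_mul_self A).1.eigenvectorUnitary : Matrix (Fin n) (Fin n) ℂ) *
    Matrix.diagonal ((fun x : ℝ => (x : ℂ)) ∘ (Real.sqrt ∘ (Matrix.posSemidef_conjTranspose_mul_self A).1.eigenvalues)) *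
    (star (Matrix.posSemidef_conjTranspose_mul_self A).1.eigenvectorUnitary :
      Matrix (Fin n) (Fin n) ℂ)).trace.re

/-- `sup_α(ρ/σ) = sup { Tr[Eρ]/Tr[Eσ] : α⁻¹·𝟙 ≤ E ≤ 𝟙 }`. -/
noncomputable def supAlpha {n : ℕ} (α : ℝ) (ρ σ : Matrix (Fin n) (Fin n) ℂ) : ℝ :=
  sSup { x : ℝ | ∃ E : Matrix (Fin n) (Fin n) ℂ,
    (E - ((α⁻¹ : ℝ) : ℂ) • (1 : Matrix (Fin n) (Fin n) ℂ)).PosSemidef ∧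
    ((1 : Matrix (Fin n) (Fin n) ℂ) - E).PosSemidef ∧
    x = ((E * ρ).trace.re) / ((E * σ).trace.re) }

namespace TNAux

open Matrix

variable {n : ℕ}

lemma sqrt_congr {A B : Matrix (Fin n) (Fin n) ℂ} (h : A = B) (hA : A.PosSemidef)
    (hB : B.PosSemidef) : (hA.1.cfc Real.sqrt).trace.re = (hB.1.cfc Real.sqrt).trace.re := by
  subst h; rfl

lemma traceNorm_neg (A : Matrix (Fin n) (Fin n) ℂ) : traceNorm (-A) = traceNorm A := by
  have h : (-A)ᴴ * (-A) = Aᴴ * A := by simp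
  simp only [traceNorm]
  exact sqrt_congr h (Matrix.posSemidef_conjTranspose_mul_self (-A))
    (Matrix.posSemidef_conjTranspose_mul_self A)

lemma diag_re_nonneg {A : Matrix (Fin n) (Fin n) ℂ} (hA : A.PosSemidef) (i : Fin n) :
    0 ≤ (A i i).re := by
  have h := hA.dotProduct_mulVec_nonneg (Pi.single i 1)
  have e : (star (Pi.single i 1) : Fin n → ℂ) ⬝ᵥ (A *ᵥ Pi.single i 1) = A i i := by
    simp [dotProduct, Matrix.mulVec, Pi.single_apply, apply_ite (star : ℂ → ℂ),
      mul_ite, ite_mul, Finset.sum_ite_eq', Finset.mul_sum]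
  rw [e] at h
  exact (Complex.le_def.mp h).1.trans_eq (by simp)

lemma trace_re_nonneg {A : Matrix (Fin n) (Fin n) ℂ} (hA : A.PosSemidef) :
    0 ≤ A.trace.re := by
  rw [Matrix.trace, Complex.re_sum]
  exact Finset.sum_nonneg fun i _ => diag_re_nonneg hA i

open scoped MatrixOrder in
lemma trace_mul_psd_re_nonneg {P S : Matrix (Fin n) (Fin n) ℂ} (hP : P.PosSemidef)
    (hS : S.PosSemidef) : 0 ≤ ((P * S).trace).re := by
  have hS0 : 0 ≤ S := Matrix.nonneg_iff_posSemidef.mpr hS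
  have h1 : P * S = (P * CFC.sqrt S) * CFC.sqrt S := by
    rw [Matrix.mul_assoc, CFC.sqrt_mul_sqrt_self S hS0]
  have h2 : ((P * CFC.sqrt S) * CFC.sqrt S).trace = (CFC.sqrt S * P * CFC.sqrt S).trace := by
    rw [Matrix.trace_mul_comm, Matrix.mul_assoc]
  have h3 : (CFC.sqrt S * P * CFC.sqrt S).PosSemidef := by
    have := hP.mul_mul_conjTranspose_same (CFC.sqrt S)
    rwa [(Matrix.nonneg_iff_posSemidef.mp (CFC.sqrt_nonneg S)).1.eq] at this
  rw [h1, h2]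
  exact trace_re_nonneg h3

lemma psd_real_smul {A : Matrix (Fin n) (Fin n) ℂ} (hA : A.PosSemidef) {r : ℝ} (hr : 0 ≤ r) :
    (((r : ℝ) : ℂ) • A).PosSemidef := by
  refine Matrix.PosSemidef.of_dotProduct_mulVec_nonneg ?_ ?_
  · show (((r : ℝ) : ℂ) • A)ᴴ = _
    rw [Matrix.conjTranspose_smul, hA.1.eq]
    simp [Complex.star_def, Complex.conj_ofReal]
  · intro x
    rw [Matrix.smul_mulVec, dotProduct_smul, smul_eq_mul]
    exact mul_nonneg (by exact_mod_cast hr) (hA.dotProduct_mulVec_nonneg x)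

lemma psd_zero : (0 : Matrix (Fin n) (Fin n) ℂ).PosSemidef := by
  constructor
  · simp [Matrix.IsHermitian]
  · intro x; simp

/-- The set of values `Tr[P H].re` over `0 ≤ P ≤ 1`. -/
def tSet (H : Matrix (Fin n) (Fin n) ℂ) : Set ℝ :=
  {x : ℝ | ∃ P : Matrix (Fin n) (Fin n) ℂ, P.PosSemidef ∧
    ((1 : Matrix (Fin n) (Fin n) ℂ) - P).PosSemidef ∧ x = ((P * H).trace).re}

section spectral

variable {A : Matrix (Fin n) (Fin n) ℂ} (hA : A.IsHermitian)

private lemma hU1 : (hA.eigenvectorUnitary : Matrix (Fin n) (Fin n) ℂ) *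
    star (hA.eigenvectorUnitary : Matrix (Fin n) (Fin n) ℂ) = 1 :=
  Matrix.mem_unitaryGroup_iff.mp (Matrix.IsHermitian.eigenvectorUnitary hA).2

private lemma hU2 : star (hA.eigenvectorUnitary : Matrix (Fin n) (Fin n) ℂ) *
    (hA.eigenvectorUnitary : Matrix (Fin n) (Fin n) ℂ) = 1 :=
  Matrix.mem_unitaryGroup_iff'.mp (Matrix.IsHermitian.eigenvectorUnitary hA).2

private lemma conj_mul_conj (d e : Fin n → ℂ) :
    ((hA.eigenvectorUnitary : Matrix (Fin n) (Fin n) ℂ) * diagonal d *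
      star (hA.eigenvectorUnitary : Matrix (Fin n) (Fin n) ℂ)) *
    ((hA.eigenvectorUnitary : Matrix (Fin n) (Fin n) ℂ) * diagonal e *
      star (hA.eigenvectorUnitary : Matrix (Fin n) (Fin n) ℂ)) =
    (hA.eigenvectorUnitary : Matrix (Fin n) (Fin n) ℂ) * diagonal (fun i => d i * e i) *
      star (hA.eigenvectorUnitary : Matrix (Fin n) (Fin n) ℂ) := by
  set U := (hA.eigenvectorUnitary : Matrix (Fin n) (Fin n) ℂ)
  calc U * diagonal d * star U * (U * diagonal e * star U)
      = U * diagonal d * (star U * U) * diagonal e * star U := by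
        simp only [Matrix.mul_assoc]
    _ = U * diagonal (fun i => d i * e i) * star U := by
        rw [hU2 hA, Matrix.mul_one]
        simp only [Matrix.mul_assoc, Matrix.diagonal_mul_diagonal]

private lemma trace_conj (d : Fin n → ℂ) :
    ((hA.eigenvectorUnitary : Matrix (Fin n) (Fin n) ℂ) * diagonal d *
      star (hA.eigenvectorUnitary : Matrix (Fin n) (Fin n) ℂ)).trace = ∑ i, d i := by
  rw [Matrix.trace_mul_comm, ← Matrix.mul_assoc, hU2 hA, Matrix.one_mul, Matrix.trace_diagonal]

private lemma conj_psd {d : Fin n → ℂ} (hd : ∀ i, 0 ≤ d i) :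
    ((hA.eigenvectorUnitary : Matrix (Fin n) (Fin n) ℂ) * diagonal d *
      star (hA.eigenvectorUnitary : Matrix (Fin n) (Fin n) ℂ)).PosSemidef := by
  have := (Matrix.posSemidef_diagonal_iff.mpr hd).mul_mul_conjTranspose_same
    (hA.eigenvectorUnitary : Matrix (Fin n) (Fin n) ℂ)
  rwa [← Matrix.star_eq_conjTranspose] at this

lemma sum_eigen_eq_trace_re : ∑ i, hA.eigenvalues i = A.trace.re := by
  have h : A.trace = ∑ i, (hA.eigenvalues i : ℂ) := by
    conv_lhs => rw [hA.spectral_theorem, Unitary.conjStarAlgAut_apply]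
    rw [trace_conj hA]
    rfl
  rw [h, Complex.re_sum]
  simp

lemma eq_zero_of_eigen_zero (h0 : ∀ i, hA.eigenvalues i = 0) : A = 0 := by
  have hsp := hA.spectral_theorem
  rw [hsp]
  have e : Matrix.diagonal (RCLike.ofReal ∘ hA.eigenvalues) = (0 : Matrix (Fin n) (Fin n) ℂ) := by
    have e2 : (RCLike.ofReal ∘ hA.eigenvalues : Fin n → ℂ) = fun _ => 0 := by
      funext i; simp [h0 i]
    rw [e2, Matrix.diagonal_zero]
  rw [e, Unitary.conjStarAlgAut_apply, Matrix.mul_zero, Matrix.zero_mul]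

lemma isGreatest_tSet : IsGreatest (tSet A) (∑ i, max (hA.eigenvalues i) 0) := by
  set U := (hA.eigenvectorUnitary : Matrix (Fin n) (Fin n) ℂ) with hUdef
  have hspec : A = U * diagonal (RCLike.ofReal ∘ hA.eigenvalues) * star U := hA.spectral_theorem
  constructor
  · -- membership
    set χ : Fin n → ℂ := fun i => if 0 < hA.eigenvalues i then (1 : ℂ) else 0 with hχ
    refine ⟨U * diagonal χ * star U, ?_, ?_, ?_⟩
    · exact conj_psd hA fun i => by by_cases h : 0 < hA.eigenvalues i <;> simp [hχ, h]
    · have e : (1 : Matrix (Fin n) (Fin n) ℂ) - U * diagonal χ * star U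
          = U * diagonal (fun i => 1 - χ i) * star U := by
        have h1 : (1 : Matrix (Fin n) (Fin n) ℂ) = U * diagonal (fun _ => (1:ℂ)) * star U := by
          rw [Matrix.diagonal_one, Matrix.mul_one, hU1 hA]
        conv_lhs => rw [h1]
        rw [← Matrix.sub_mul, ← Matrix.mul_sub, Matrix.diagonal_sub]
      rw [e]
      exact conj_psd hA fun i => by by_cases h : 0 < hA.eigenvalues i <;> simp [hχ, h]
    · have htr0 := congrArg (fun X => (U * diagonal χ * star U * X).trace.re) hspec
      rw [htr0, conj_mul_conj hA, trace_conj hA, Complex.re_sum]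
      congr 1
      funext i
      by_cases h : 0 < hA.eigenvalues i
      · simp [hχ, h, max_eq_left h.le, Function.comp]
      · simp [hχ, h, max_eq_right (le_of_not_gt h), Function.comp]
  · -- upper bound
    rintro x ⟨P, hP, hP1, rfl⟩
    set M := star U * P * U with hM
    have hMpsd : M.PosSemidef := by
      have := hP.conjTranspose_mul_mul_same U
      rwa [← Matrix.star_eq_conjTranspose] at this
    have hM1psd : ((1 : Matrix (Fin n) (Fin n) ℂ) - M).PosSemidef := by
      have h := hP1.conjTranspose_mul_mul_same U
      rw [← Matrix.star_eq_conjTranspose] at h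
      have e : star U * ((1 : Matrix (Fin n) (Fin n) ℂ) - P) * U = 1 - M := by
        rw [Matrix.mul_sub, Matrix.mul_one, Matrix.sub_mul, hU2 hA]
      rwa [e] at h
    have hbound : ∀ i, 0 ≤ (M i i).re ∧ (M i i).re ≤ 1 := by
      intro i
      refine ⟨diag_re_nonneg hMpsd i, ?_⟩
      have h := diag_re_nonneg hM1psd i
      have e : (((1 : Matrix (Fin n) (Fin n) ℂ) - M) i i).re = 1 - (M i i).re := by
        simp [Matrix.sub_apply, Matrix.one_apply_eq]
      rw [e] at h; linarith
    have htr : (P * A).trace = ∑ i, M i i * (hA.eigenvalues i : ℂ) := by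
      have htr0 := congrArg (fun X => (P * X).trace) hspec
      rw [htr0]
      have e1 : P * (U * diagonal (RCLike.ofReal ∘ hA.eigenvalues) * star U)
          = (P * U * diagonal (RCLike.ofReal ∘ hA.eigenvalues)) * star U := by
        simp only [Matrix.mul_assoc]
      rw [e1, Matrix.trace_mul_comm]
      have e2 : star U * (P * U * diagonal (RCLike.ofReal ∘ hA.eigenvalues))
          = M * diagonal (RCLike.ofReal ∘ hA.eigenvalues) := by
        simp only [hM, Matrix.mul_assoc]
      rw [e2]
      simp [Matrix.trace, Matrix.diag, Matrix.mul_diagonal, Function.comp]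
    rw [htr, Complex.re_sum]
    apply Finset.sum_le_sum
    intro i _
    have h1 : (M i i * (hA.eigenvalues i : ℂ)).re = (M i i).re * hA.eigenvalues i := by
      simp [Complex.mul_re]
    rw [h1]
    rcases le_or_gt (hA.eigenvalues i) 0 with h | h
    · exact le_trans (mul_nonpos_of_nonneg_of_nonpos (hbound i).1 h) (le_max_right _ _)
    · exact le_trans (mul_le_of_le_one_left h.le (hbound i).2) (le_max_left _ _)

lemma traceNorm_eq_sum_abs : traceNorm A = ∑ i, |hA.eigenvalues i| := by
  set U := (hA.eigenvectorUnitary : Matrix (Fin n) (Fin n) ℂ) with hUdef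
  have hspec : A = U * diagonal (RCLike.ofReal ∘ hA.eigenvalues) * star U := hA.spectral_theorem
  set B := U * diagonal (fun i => ((|hA.eigenvalues i| : ℝ) : ℂ)) * star U with hB
  have hBpsd : B.PosSemidef := conj_psd hA fun i => by
    rw [Complex.le_def]; constructor
    · simp [abs_nonneg]
    · simp
  have hB2 : B ^ 2 = Aᴴ * A := by
    rw [hA.eq, pow_two]
    have hAA := congrArg (fun X => X * X) hspec
    rw [hAA, hB, conj_mul_conj hA, conj_mul_conj hA]
    have efun : (fun i => ((|hA.eigenvalues i| : ℝ) : ℂ) * ((|hA.eigenvalues i| : ℝ) : ℂ))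
        = fun i => (RCLike.ofReal ∘ hA.eigenvalues) i * (RCLike.ofReal ∘ hA.eigenvalues) i := by
      funext i
      show ((|hA.eigenvalues i| : ℝ) : ℂ) * ((|hA.eigenvalues i| : ℝ) : ℂ)
          = ((hA.eigenvalues i : ℝ) : ℂ) * ((hA.eigenvalues i : ℝ) : ℂ)
      rw [← Complex.ofReal_mul, ← Complex.ofReal_mul, abs_mul_abs_self]
    rw [efun]
  have hsqrt : traceNorm A = B.trace.re := by
    have e1 : traceNorm A = (cfc Real.sqrt (Aᴴ * A)).trace.re := by
      rw [Matrix.IsHermitian.cfc_eq (Matrix.posSemidef_conjTranspose_mul_self A).1]; rfl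
    have e2 : Aᴴ * A = cfc (fun x : ℝ => x ^ 2) A := by
      rw [cfc_pow_id (R := ℝ) A 2 hA.isSelfAdjoint, hA.eq, pow_two]
    have e3 : cfc Real.sqrt (cfc (fun x : ℝ => x ^ 2) A) = cfc (fun x : ℝ => |x|) A := by
      rw [← cfc_comp Real.sqrt (fun x : ℝ => x ^ 2) A]
      congr 1; funext x; simp [Function.comp, Real.sqrt_sq_eq_abs]
    have e4 : cfc (fun x : ℝ => |x|) A = B := by
      rw [Matrix.IsHermitian.cfc_eq hA]; rfl
    rw [e1, e2, e3, e4]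
  rw [hsqrt, hB, trace_conj hA, Complex.re_sum]
  simp

end spectral

lemma herm_sub_smul {ρ σ : Matrix (Fin n) (Fin n) ℂ} (hρ : ρ.IsHermitian)
    (hσ : σ.IsHermitian) (t : ℝ) : (ρ - ((t : ℝ) : ℂ) • σ).IsHermitian := by
  refine hρ.sub ?_
  show (((t : ℝ) : ℂ) • σ)ᴴ = _
  rw [Matrix.conjTranspose_smul, hσ.eq]
  simp [Complex.star_def, Complex.conj_ofReal]

/-- `p(t) = max { Tr[P(ρ - tσ)].re : 0 ≤ P ≤ 1 }`. -/
noncomputable def pfun (ρ σ : Matrix (Fin n) (Fin n) ℂ) (t : ℝ) : ℝ :=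
  sSup (tSet (ρ - ((t : ℝ) : ℂ) • σ))

lemma pfun_isGreatest {ρ σ : Matrix (Fin n) (Fin n) ℂ} (hρ : ρ.IsHermitian)
    (hσ : σ.IsHermitian) (t : ℝ) :
    IsGreatest (tSet (ρ - ((t : ℝ) : ℂ) • σ)) (pfun ρ σ t) := by
  have h := isGreatest_tSet (herm_sub_smul hρ hσ t)
  rw [pfun, h.csSup_eq]
  exact h

lemma trace_expand (P ρ σ : Matrix (Fin n) (Fin n) ℂ) (t : ℝ) :
    ((P * (ρ - ((t : ℝ) : ℂ) • σ)).trace).re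
      = ((P * ρ).trace).re - t * ((P * σ).trace).re := by
  rw [Matrix.mul_sub, Matrix.trace_sub, Matrix.mul_smul, Matrix.trace_smul, Complex.sub_re]
  congr 1
  simp [smul_eq_mul, Complex.mul_re]

lemma trace_decomp (a c : ℝ) (P τ : Matrix (Fin n) (Fin n) ℂ) (hτ : τ.trace = 1) :
    (((((a : ℝ) : ℂ) • (1 : Matrix (Fin n) (Fin n) ℂ) + ((c : ℝ) : ℂ) • P) * τ).trace).re
      = a + c * ((P * τ).trace).re := by
  rw [Matrix.add_mul, smul_mul_assoc, smul_mul_assoc, Matrix.one_mul, Matrix.trace_add,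
    Matrix.trace_smul, Matrix.trace_smul, hτ, Complex.add_re]
  simp [smul_eq_mul, Complex.mul_re]

lemma one_sub_smul_one (a : ℝ) :
    (1 : Matrix (Fin n) (Fin n) ℂ) - ((a : ℝ) : ℂ) • 1 = (((1 - a : ℝ)) : ℂ) • 1 := by
  push_cast
  rw [sub_smul, one_smul]

lemma trace_mul_le_one {σ P : Matrix (Fin n) (Fin n) ℂ} (hσ : σ.PosSemidef)
    (hσtr : σ.trace = 1) (hP1 : ((1 : Matrix (Fin n) (Fin n) ℂ) - P).PosSemidef) :
    ((P * σ).trace).re ≤ 1 := by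
  have h := trace_mul_psd_re_nonneg hP1 hσ
  have e : ((1 : Matrix (Fin n) (Fin n) ℂ) - P) * σ = σ - P * σ := by
    rw [Matrix.sub_mul, Matrix.one_mul]
  rw [e, Matrix.trace_sub, Complex.sub_re, hσtr] at h
  simp only [Complex.one_re] at h
  linarith

end TNAux

/-- Remark 2 of the paper: for density matrices `ρ ≠ σ` on `ℂ^n` and `α > 1`,
`‖sup_α(ρ/σ)·σ - ρ‖₁ / (sup_α(ρ/σ) - 1) = (α+1)/(α-1)`. -/
theorem traceNorm_at_supAlpha
    {n : ℕ} (ρ σ : Matrix (Fin n) (Fin n) ℂ)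
    (hρ : ρ.PosSemidef) (hρtr : ρ.trace = 1)
    (hσ : σ.PosSemidef) (hσtr : σ.trace = 1)
    (hne : ρ ≠ σ) (α : ℝ) (hα : 1 < α) :
    traceNorm (((supAlpha α ρ σ : ℝ) : ℂ) • σ - ρ) / (supAlpha α ρ σ - 1) =
      (α + 1) / (α - 1) := by
  classical
  have hα0 : (0:ℝ) < α := lt_trans one_pos hα
  have hαinv : 0 < α⁻¹ := inv_pos.mpr hα0
  have hαinv1 : α⁻¹ < 1 := by
    have h1 : α⁻¹ * α = 1 := inv_mul_cancel₀ hα0.ne'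
    nlinarith [mul_pos hαinv (show (0:ℝ) < α - 1 by linarith)]
  obtain ⟨c, hc⟩ : ∃ c : ℝ, c = 1 - α⁻¹ := ⟨_, rfl⟩
  have hc0 : 0 < c := by rw [hc]; linarith
  have hρ1 : ρ.trace.re = 1 := by rw [hρtr]; simp
  have hσ1 : σ.trace.re = 1 := by rw [hσtr]; simp
  obtain ⟨p, hpdef⟩ : ∃ p : ℝ → ℝ, ∀ t, p t = TNAux.pfun ρ σ t := ⟨_, fun _ => rfl⟩
  have hpg : ∀ t : ℝ, IsGreatest (TNAux.tSet (ρ - ((t:ℝ):ℂ) • σ)) (p t) := fun t => by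
    rw [hpdef]; exact TNAux.pfun_isGreatest hρ.1 hσ.1 t
  have hmem : ∀ t : ℝ, ∃ P : Matrix (Fin n) (Fin n) ℂ, P.PosSemidef ∧
      ((1 : Matrix (Fin n) (Fin n) ℂ) - P).PosSemidef ∧
      p t = ((P*ρ).trace).re - t * ((P*σ).trace).re := by
    intro t
    obtain ⟨P, h1, h2, h3⟩ := (hpg t).1
    exact ⟨P, h1, h2, by rw [h3, TNAux.trace_expand]⟩
  have hub : ∀ (t : ℝ) (P : Matrix (Fin n) (Fin n) ℂ), P.PosSemidef →
      ((1 : Matrix (Fin n) (Fin n) ℂ) - P).PosSemidef →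
      ((P*ρ).trace).re - t * ((P*σ).trace).re ≤ p t := by
    intro t P h1 h2
    exact (hpg t).2 ⟨P, h1, h2, (TNAux.trace_expand P ρ σ t).symm⟩
  have hb01 : ∀ P : Matrix (Fin n) (Fin n) ℂ, P.PosSemidef →
      ((1 : Matrix (Fin n) (Fin n) ℂ) - P).PosSemidef →
      0 ≤ ((P*σ).trace).re ∧ ((P*σ).trace).re ≤ 1 :=
    fun P h1 h2 => ⟨TNAux.trace_mul_psd_re_nonneg h1 hσ, TNAux.trace_mul_le_one hσ hσtr h2⟩
  have hmono : ∀ s t : ℝ, s ≤ t → p t ≤ p s := by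
    intro s t hst
    obtain ⟨P, h1, h2, h3⟩ := hmem t
    have h4 := hub s P h1 h2
    have hb := (hb01 P h1 h2).1
    nlinarith [mul_le_mul_of_nonneg_right hst hb]
  have hlip : ∀ s t : ℝ, s ≤ t → p s ≤ p t + (t - s) := by
    intro s t hst
    obtain ⟨P, h1, h2, h3⟩ := hmem s
    have h4 := hub t P h1 h2
    have hb := hb01 P h1 h2
    nlinarith [mul_le_mul_of_nonneg_left hb.2 (sub_nonneg.mpr hst),
      mul_le_mul_of_nonneg_right hst hb.1]
  have hcont : Continuous p := by
    have hl : LipschitzWith 1 p := by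
      apply LipschitzWith.of_dist_le_mul
      intro s t
      rw [Real.dist_eq, Real.dist_eq, NNReal.coe_one, one_mul]
      rcases le_total s t with h | h
      · have e : |s - t| = t - s := by rw [abs_sub_comm, abs_of_nonneg (sub_nonneg.mpr h)]
        rw [e, abs_le]
        exact ⟨by linarith [hmono s t h], by linarith [hlip s t h]⟩
      · have e : |s - t| = s - t := abs_of_nonneg (sub_nonneg.mpr h)
        rw [e, abs_le]
        exact ⟨by linarith [hlip t s h], by linarith [hmono t s h]⟩
    exact hl.continuous
  obtain ⟨F, hFdef⟩ : ∃ F : ℝ → ℝ, ∀ t, F t = α⁻¹ * (1 - t) + c * p t := ⟨_, fun _ => rfl⟩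
  have hFcont : Continuous F := by
    have e : F = fun t => α⁻¹ * (1 - t) + c * p t := funext hFdef
    rw [e]
    exact (continuous_const.mul (continuous_const.sub continuous_id)).add
      (continuous_const.mul hcont)
  have hFdec : ∀ s t : ℝ, s ≤ t → F t ≤ F s - α⁻¹ * (t - s) := by
    intro s t hst
    have h2 : c * p t ≤ c * p s := mul_le_mul_of_nonneg_left (hmono s t hst) hc0.le
    rw [hFdef, hFdef]
    nlinarith [h2]
  have hp1 : 0 < p 1 := by
    by_contra hcon
    push_neg at hcon
    have hH := TNAux.herm_sub_smul hρ.1 hσ.1 1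
    have hgr := TNAux.isGreatest_tSet hH
    have heq : p 1 = ∑ i, max (hH.eigenvalues i) 0 := (hpg 1).unique hgr
    have hnn : ∀ i, 0 ≤ max (hH.eigenvalues i) 0 := fun i => le_max_right _ _
    have hsum0 : ∑ i, max (hH.eigenvalues i) 0 = 0 :=
      le_antisymm (heq ▸ hcon) (Finset.sum_nonneg fun i _ => hnn i)
    have hle : ∀ i, hH.eigenvalues i ≤ 0 := by
      intro i
      have h0 := (Finset.sum_eq_zero_iff_of_nonneg (fun i _ => hnn i)).mp hsum0 i
        (Finset.mem_univ i)
      have := le_max_left (hH.eigenvalues i) 0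
      rw [h0] at this
      exact this
    have htr0 : ∑ i, hH.eigenvalues i = 0 := by
      rw [TNAux.sum_eigen_eq_trace_re hH, Matrix.trace_sub, Matrix.trace_smul, hρtr, hσtr]
      simp
    have hall : ∀ i, hH.eigenvalues i = 0 := fun i =>
      (Finset.sum_eq_zero_iff_of_nonpos (fun i _ => hle i)).mp htr0 i (Finset.mem_univ i)
    have hzero := TNAux.eq_zero_of_eigen_zero hH hall
    apply hne
    have h1 : ρ - σ = 0 := by simpa using hzero
    exact sub_eq_zero.mp h1
  have hF1 : 0 < F 1 := by
    rw [hFdef, sub_self, mul_zero, zero_add]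
    exact mul_pos hc0 hp1
  obtain ⟨b, hb1, hFb⟩ : ∃ b : ℝ, 1 ≤ b ∧ F b ≤ 0 := by
    have hble : (1:ℝ) ≤ 1 + α * F 1 + 1 := by nlinarith [mul_pos hα0 hF1]
    refine ⟨1 + α * F 1 + 1, hble, ?_⟩
    have h := hFdec 1 (1 + α * F 1 + 1) hble
    have e : α⁻¹ * (1 + α * F 1 + 1 - 1) = F 1 + α⁻¹ := by
      have e2 : α⁻¹ * (α * F 1) = F 1 := by
        rw [← mul_assoc, inv_mul_cancel₀ hα0.ne', one_mul]
      nlinarith [e2]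
    linarith [h, e, hαinv]
  obtain ⟨ts, hts_mem, hts⟩ : ∃ t ∈ Set.Icc (1:ℝ) b, F t = 0 := by
    have hiv := intermediate_value_Icc' hb1 hFcont.continuousOn
    have h0 : (0:ℝ) ∈ Set.Icc (F b) (F 1) := ⟨hFb, hF1.le⟩
    obtain ⟨t, ht1, ht2⟩ := hiv h0
    exact ⟨t, ht1, ht2⟩
  have hts1 : 1 < ts := by
    rcases lt_or_eq_of_le hts_mem.1 with h | h
    · exact h
    · exfalso
      have : F 1 = 0 := by rw [h]; exact hts
      linarith
  have hsup : supAlpha α ρ σ = ts := by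
    simp only [supAlpha]
    apply csSup_eq_of_forall_le_of_forall_lt_exists_gt
    · refine ⟨1, 1, ?_, ?_, ?_⟩
      · have e := TNAux.one_sub_smul_one (n := n) α⁻¹
        rw [e]
        exact TNAux.psd_real_smul (Matrix.PosDef.one.posSemidef) (by linarith)
      · rw [sub_self]; exact TNAux.psd_zero
      · rw [Matrix.one_mul, Matrix.one_mul, hρ1, hσ1]; norm_num
    · rintro x ⟨E, hE1, hE2, rfl⟩
      set P : Matrix (Fin n) (Fin n) ℂ := ((c⁻¹ : ℝ) : ℂ) • (E - ((α⁻¹:ℝ):ℂ) • 1) with hPdef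
      have hP : P.PosSemidef := TNAux.psd_real_smul hE1 (inv_nonneg.mpr hc0.le)
      have hsum1 : ((c:ℝ):ℂ) • (1 : Matrix (Fin n) (Fin n) ℂ) + ((α⁻¹:ℝ):ℂ) • 1 = 1 := by
        rw [← add_smul]
        have e : ((c:ℝ):ℂ) + ((α⁻¹:ℝ):ℂ) = 1 := by
          rw [← Complex.ofReal_add, hc]
          norm_num
        rw [e, one_smul]
      have hE' : E = ((α⁻¹:ℝ):ℂ) • 1 + ((c:ℝ):ℂ) • P := by
        rw [hPdef, smul_smul, ← Complex.ofReal_mul, mul_inv_cancel₀ hc0.ne',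
          Complex.ofReal_one, one_smul]
        abel
      have h1P : (1 : Matrix (Fin n) (Fin n) ℂ) - P = ((c⁻¹:ℝ):ℂ) • (1 - E) := by
        have e0 : ((c:ℝ):ℂ) • (1 : Matrix (Fin n) (Fin n) ℂ) - (E - ((α⁻¹:ℝ):ℂ) • 1)
            = (((c:ℝ):ℂ) • (1 : Matrix (Fin n) (Fin n) ℂ) + ((α⁻¹:ℝ):ℂ) • 1) - E := by
          abel
        have e1 : (1 : Matrix (Fin n) (Fin n) ℂ) - E
            = ((c:ℝ):ℂ) • 1 - (E - ((α⁻¹:ℝ):ℂ) • 1) := by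
          rw [e0, hsum1]
        rw [e1, smul_sub, smul_smul, ← Complex.ofReal_mul, inv_mul_cancel₀ hc0.ne',
          Complex.ofReal_one, one_smul, ← hPdef]
      have hP1 : ((1 : Matrix (Fin n) (Fin n) ℂ) - P).PosSemidef := by
        rw [h1P]; exact TNAux.psd_real_smul hE2 (inv_nonneg.mpr hc0.le)
      have hNum : ((E * ρ).trace).re = α⁻¹ + c * ((P*ρ).trace).re := by
        conv_lhs => rw [hE']
        exact TNAux.trace_decomp _ _ _ _ hρtr
      have hDen : ((E * σ).trace).re = α⁻¹ + c * ((P*σ).trace).re := by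
        conv_lhs => rw [hE']
        exact TNAux.trace_decomp _ _ _ _ hσtr
      have hbP := TNAux.trace_mul_psd_re_nonneg hP hσ
      have hD : 0 < ((E * σ).trace).re := by
        rw [hDen]
        nlinarith [mul_nonneg hc0.le hbP]
      rw [div_le_iff₀ hD]
      have haP := hub ts P hP hP1
      have hFts : α⁻¹ * (1 - ts) + c * p ts = 0 := by rw [← hFdef]; exact hts
      rw [hNum, hDen]
      have hmul := mul_le_mul_of_nonneg_left haP hc0.le
      clear_value P
      nlinarith [hmul, hFts]
    · intro w hw
      rcases lt_or_ge w 1 with hw1 | hw1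
      · refine ⟨1, ⟨1, ?_, ?_, ?_⟩, hw1⟩
        · have e := TNAux.one_sub_smul_one (n := n) α⁻¹
          rw [e]
          exact TNAux.psd_real_smul (Matrix.PosDef.one.posSemidef) (by linarith)
        · rw [sub_self]; exact TNAux.psd_zero
        · rw [Matrix.one_mul, Matrix.one_mul, hρ1, hσ1]; norm_num
      · have hFw : 0 < F w := by
          have h := hFdec w ts hw.le
          rw [hts] at h
          linarith [mul_pos hαinv (show (0:ℝ) < ts - w by linarith)]
        obtain ⟨P, hP, hP1, hpw⟩ := hmem w
        set E : Matrix (Fin n) (Fin n) ℂ := ((α⁻¹:ℝ):ℂ) • 1 + ((c:ℝ):ℂ) • P with hEdef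
        have hE1 : (E - ((α⁻¹:ℝ):ℂ) • 1).PosSemidef := by
          rw [hEdef, add_sub_cancel_left]
          exact TNAux.psd_real_smul hP hc0.le
        have hE2 : ((1 : Matrix (Fin n) (Fin n) ℂ) - E).PosSemidef := by
          have e1 : (1 : Matrix (Fin n) (Fin n) ℂ) - ((α⁻¹:ℝ):ℂ) • 1 = ((c:ℝ):ℂ) • 1 := by
            rw [hc]; exact TNAux.one_sub_smul_one (n := n) α⁻¹
          have e : (1 : Matrix (Fin n) (Fin n) ℂ) - E = ((c:ℝ):ℂ) • (1 - P) := by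
            rw [hEdef, sub_add_eq_sub_sub, e1, ← smul_sub]
          rw [e]
          exact TNAux.psd_real_smul hP1 hc0.le
        have hNum : ((E * ρ).trace).re = α⁻¹ + c * ((P*ρ).trace).re := by
          rw [hEdef]; exact TNAux.trace_decomp _ _ _ _ hρtr
        have hDen : ((E * σ).trace).re = α⁻¹ + c * ((P*σ).trace).re := by
          rw [hEdef]; exact TNAux.trace_decomp _ _ _ _ hσtr
        have hbP := TNAux.trace_mul_psd_re_nonneg hP hσ
        have hD : 0 < ((E * σ).trace).re := by
          rw [hDen]
          nlinarith [mul_nonneg hc0.le hbP]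
        have hFw' : 0 < α⁻¹ * (1 - w) + c * p w := by rw [← hFdef]; exact hFw
        rw [hpw] at hFw'
        refine ⟨_, ⟨E, hE1, hE2, rfl⟩, ?_⟩
        rw [lt_div_iff₀ hD, hNum, hDen]
        clear_value E
        nlinarith [hFw']
  rw [hsup]
  have hHherm : (ρ - ((ts:ℝ):ℂ) • σ).IsHermitian := TNAux.herm_sub_smul hρ.1 hσ.1 ts
  have hneg : ((ts:ℝ):ℂ) • σ - ρ = -(ρ - ((ts:ℝ):ℂ) • σ) := by rw [neg_sub]
  rw [hneg, TNAux.traceNorm_neg]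
  have h2 : traceNorm (ρ - ((ts:ℝ):ℂ) • σ) = ∑ i, |hHherm.eigenvalues i| :=
    TNAux.traceNorm_eq_sum_abs hHherm
  have h3 : p ts = ∑ i, max (hHherm.eigenvalues i) 0 :=
    (hpg ts).unique (TNAux.isGreatest_tSet hHherm)
  have h4 : ∑ i, hHherm.eigenvalues i = 1 - ts := by
    rw [TNAux.sum_eigen_eq_trace_re hHherm, Matrix.trace_sub, Matrix.trace_smul, hρtr, hσtr]
    simp [smul_eq_mul, Complex.sub_re, Complex.mul_re]
  have h5 : ∑ i, |hHherm.eigenvalues i| = 2 * p ts - (1 - ts) := by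
    rw [h3, ← h4, Finset.mul_sum, ← Finset.sum_sub_distrib]
    apply Finset.sum_congr rfl
    intro i _
    rcases le_total (hHherm.eigenvalues i) 0 with h | h
    · rw [abs_of_nonpos h, max_eq_right h]; ring
    · rw [abs_of_nonneg h, max_eq_left h]; ring
  rw [h2, h5]
  have hFts : α⁻¹ * (1 - ts) + c * p ts = 0 := by rw [← hFdef]; exact hts
  have hα1 : (0:ℝ) < α - 1 := by linarith
  have hts1' : (0:ℝ) < ts - 1 := by linarith
  have hrel : (α - 1) * p ts = ts - 1 := by
    have e1 : α * c = α - 1 := by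
      rw [hc, mul_sub, mul_one, mul_inv_cancel₀ hα0.ne']
    have e2 : α * (α⁻¹ * (1 - ts) + c * p ts) = 0 := by rw [hFts, mul_zero]
    have e3 : α * (α⁻¹ * (1 - ts) + c * p ts) = (1 - ts) + (α - 1) * p ts := by
      rw [mul_add, ← mul_assoc, ← mul_assoc, mul_inv_cancel₀ hα0.ne', one_mul, e1]
    rw [e3] at e2
    linarith
  rw [div_eq_div_iff hts1'.ne' hα1.ne']
  linear_combination (2:ℝ) * hrel
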